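/- arXiv:2111.10807 — 2 statements merged into one kernel-verified Lean document; each statement's English description precedes it below -/
import Mathlib

section
/- For an irrational x in (0,1), the condition lim_{j→∞} (log q_{j+1}(x))/q_j(x) = 0 holds if and only if lim_{j→∞} β_{j-1}(x)·log a_{j+1}(x) = 0, where q_j are the convergent denominators, a_j the partial quotients, and β_j(x)=∏_{i=0}^{j}G^i(x). -/
open Filter Topology Finset

/-- Gauss map `G(y) = 1/y - ⌊1/y⌋`. -/
noncomputable def gauss (x : ℝ) : ℝ := Int.fract x⁻¹

/-- `pa x j` is the `j`-th continued fraction partial quotient `a_j(x) = ⌊1/G^{j-1}(x)⌋` (for `j ≥ 1`). -/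
noncomputable def pa (x : ℝ) (j : ℕ) : ℤ := ⌊(gauss^[j-1] x)⁻¹⌋

/-- `beta x j = β_j(x) = ∏_{i=0}^{j} G^i(x)`. -/
noncomputable def beta (x : ℝ) (j : ℕ) : ℝ := ∏ i ∈ Finset.range (j+1), gauss^[i] x

/-- Convergent denominators: `q_0 = 1`, `q_1 = a_1`, `q_j = a_j q_{j-1} + q_{j-2}`. -/
noncomputable def q (x : ℝ) : ℕ → ℤ
  | 0 => 1
  | 1 => pa x 1
  | (n+2) => pa x (n+2) * q x (n+1) + q x n

section aux

variable {x : ℝ} (hx : x ∈ Set.Ioo (0:ℝ) 1) (hirr : Irrational x)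

lemma gauss_mem_Ioo {y : ℝ} (hy : y ∈ Set.Ioo (0:ℝ) 1) (hyirr : Irrational y) :
    gauss y ∈ Set.Ioo (0:ℝ) 1 ∧ Irrational (gauss y) := by
  have hinv : Irrational y⁻¹ := hyirr.inv
  have hfr : Irrational (gauss y) := by
    unfold gauss
    rw [Int.fract]
    exact hinv.sub_intCast _
  have hne : gauss y ≠ 0 := by simpa using hfr.ne_int 0
  exact ⟨⟨lt_of_le_of_ne (Int.fract_nonneg _) (Ne.symm hne), Int.fract_lt_one _⟩, hfr⟩

include hx hirr in
lemma iter_mem (j : ℕ) : gauss^[j] x ∈ Set.Ioo (0:ℝ) 1 ∧ Irrational (gauss^[j] x) := by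
  induction j with
  | zero => exact ⟨hx, hirr⟩
  | succ n ih =>
    rw [Function.iterate_succ_apply']
    exact gauss_mem_Ioo ih.1 ih.2

include hx hirr

lemma one_le_pa (j : ℕ) : 1 ≤ pa x (j+1) := by
  have h := (iter_mem hx hirr j).1
  have h1 : (1:ℝ) < (gauss^[j] x)⁻¹ := by
    rw [lt_inv_comm₀ one_pos h.1]; simpa using h.2
  have : (1:ℤ) ≤ ⌊(gauss^[j] x)⁻¹⌋ := by
    rw [Int.le_floor]; exact_mod_cast h1.le
  simpa [pa] using this

lemma iter_eq_inv (j : ℕ) :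
    gauss^[j] x = ((pa x (j+1) : ℝ) + gauss^[j+1] x)⁻¹ := by
  set y := gauss^[j] x with hy
  have hmem := (iter_mem hx hirr j).1
  have hne : y ≠ 0 := ne_of_gt hmem.1
  have h1 : gauss^[j+1] x = y⁻¹ - ⌊y⁻¹⌋ := by
    rw [Function.iterate_succ_apply', ← hy, gauss, Int.fract]
  have h2 : (pa x (j+1) : ℝ) = ⌊y⁻¹⌋ := by simp [pa, hy]
  rw [h1, h2]
  rw [add_sub_cancel, inv_inv]

lemma one_le_q (j : ℕ) : 1 ≤ q x j ∧ q x j ≤ q x (j+1) := by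
  induction j with
  | zero =>
    refine ⟨le_refl _, ?_⟩
    show (1:ℤ) ≤ q x 1
    exact one_le_pa hx hirr 0
  | succ n ih =>
    have hq1 : 1 ≤ q x (n+1) := le_trans ih.1 ih.2
    have hpa : 1 ≤ pa x (n+2) := one_le_pa hx hirr (n+1)
    constructor
    · exact hq1
    · show q x (n+1) ≤ pa x (n+2) * q x (n+1) + q x n
      nlinarith [ih.1]

lemma nat_le_q (j : ℕ) : (j : ℤ) ≤ q x j := by
  induction j using Nat.twoStepInduction with
  | zero => simp [q]
  | one => simpa [q] using one_le_pa hx hirr 0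
  | more n ih1 ih2 =>
    show ((n:ℤ) + 2) ≤ pa x (n+2) * q x (n+1) + q x n
    have hpa : 1 ≤ pa x (n+2) := one_le_pa hx hirr (n+1)
    have h1 : 1 ≤ q x (n+1) := (one_le_q hx hirr (n+1)).1
    have h0 : 1 ≤ q x n := (one_le_q hx hirr n).1
    push_cast at ih2 ⊢
    have hm : 1 * q x (n+1) ≤ pa x (n+2) * q x (n+1) :=
      mul_le_mul_of_nonneg_right hpa (le_trans zero_le_one h1)
    linarith

lemma beta_eq (j : ℕ) :
    beta x j = ((q x (j+1) : ℝ) + (q x j : ℝ) * gauss^[j+1] x)⁻¹ := by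
  induction j with
  | zero =>
    have h := iter_eq_inv hx hirr 0
    rw [show q x 1 = pa x 1 from rfl, show q x 0 = 1 from rfl]
    push_cast
    rw [one_mul]
    simpa [beta] using h
  | succ n ih =>
    have hb : beta x (n+1) = beta x n * gauss^[n+1] x := by
      rw [beta, beta, Finset.prod_range_succ]
    set u := gauss^[n+1] x with hu
    set v := gauss^[n+2] x with hv
    have humem := (iter_mem hx hirr (n+1)).1
    have hvmem := (iter_mem hx hirr (n+2)).1
    have hune : u ≠ 0 := ne_of_gt humem.1
    have key : u = ((pa x (n+2) : ℝ) + v)⁻¹ := iter_eq_inv hx hirr (n+1)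
    have hav : (pa x (n+2) : ℝ) + v = u⁻¹ := by
      rw [key, inv_inv]
    have hq1 : (1:ℝ) ≤ q x (n+1) := by exact_mod_cast (one_le_q hx hirr (n+1)).1
    have hq0 : (1:ℝ) ≤ q x n := by exact_mod_cast (one_le_q hx hirr n).1
    have hd1 : (q x (n+1) : ℝ) + (q x n : ℝ) * u > 0 := by
      nlinarith [humem.1]
    have hd2 : (q x (n+2) : ℝ) + (q x (n+1) : ℝ) * v > 0 := by
      have hq2 : (1:ℝ) ≤ q x (n+2) := by exact_mod_cast (one_le_q hx hirr (n+2)).1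
      nlinarith [hvmem.1]
    rw [hb, ih]
    have hq2e : (q x (n+2) : ℝ) = (pa x (n+2) : ℝ) * (q x (n+1) : ℝ) + (q x n : ℝ) := by
      show ((pa x (n+2) * q x (n+1) + q x n : ℤ) : ℝ) = _
      push_cast; ring
    have hpe : (pa x (n+2) : ℝ) = u⁻¹ - v := by linarith [hav]
    have hupos : 0 < u := humem.1
    rw [hq2e, hpe]
    rw [show ((u⁻¹ - v) * (q x (n+1):ℝ) + (q x n:ℝ) + (q x (n+1):ℝ) * v)
        = u⁻¹ * (q x (n+1):ℝ) + (q x n:ℝ) from by ring]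
    have h2ne : u⁻¹ * (q x (n+1):ℝ) + (q x n:ℝ) ≠ 0 := by
      have := mul_pos (inv_pos.2 hupos) (lt_of_lt_of_le one_pos hq1)
      nlinarith
    field_simp

end aux

/-- `log q_{j+1}/q_j → 0` iff `β_{j-1} log a_{j+1} → 0`. -/
theorem stmt3 (x : ℝ) (hx : x ∈ Set.Ioo (0:ℝ) 1) (hirr : Irrational x) :
    Tendsto (fun j : ℕ => Real.log (q x (j+1)) / (q x j : ℝ)) atTop (nhds 0) ↔
      Tendsto (fun j : ℕ => beta x j * Real.log (pa x (j+2))) atTop (nhds 0) := by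
  set L : ℕ → ℝ := fun j => Real.log (q x (j+1)) / (q x j : ℝ) with hL
  set R : ℕ → ℝ := fun j => beta x j * Real.log (pa x (j+2)) with hR
  -- basic facts
  have hq1 : ∀ j, (1:ℝ) ≤ (q x j : ℝ) := fun j => by
    exact_mod_cast (one_le_q hx hirr j).1
  have hqmono : ∀ j, (q x j : ℝ) ≤ (q x (j+1) : ℝ) := fun j => by
    exact_mod_cast (one_le_q hx hirr j).2
  have hpa1 : ∀ j, (1:ℝ) ≤ (pa x (j+1) : ℝ) := fun j => by
    exact_mod_cast one_le_pa hx hirr j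
  have hqpos : ∀ j, (0:ℝ) < (q x j : ℝ) := fun j => lt_of_lt_of_le one_pos (hq1 j)
  -- bounds on beta
  have hbeta_le : ∀ j, beta x j ≤ ((q x (j+1) : ℝ))⁻¹ := by
    intro j
    rw [beta_eq hx hirr j]
    have hg := (iter_mem hx hirr (j+1)).1
    apply inv_anti₀ (hqpos (j+1))
    nlinarith [hq1 j, hg.1]
  have hbeta_ge : ∀ j, ((2 * (q x (j+1) : ℝ)))⁻¹ ≤ beta x j := by
    intro j
    rw [beta_eq hx hirr j]
    have hg := (iter_mem hx hirr (j+1)).1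
    have hd : (0:ℝ) < (q x (j+1) : ℝ) + (q x j : ℝ) * gauss^[j+1] x := by
      nlinarith [hq1 j, hq1 (j+1), hg.1]
    apply inv_anti₀ hd
    nlinarith [hqmono j, hq1 j, hg.2]
  have hlogpa : ∀ j, (0:ℝ) ≤ Real.log (pa x (j+2)) := fun j =>
    Real.log_nonneg (hpa1 (j+1))
  have hbetapos : ∀ j, 0 < beta x j := fun j =>
    lt_of_lt_of_le (inv_pos.2 (by linarith [hq1 (j+1)])) (hbeta_ge j)
  have hRnonneg : ∀ j, 0 ≤ R j := fun j => mul_nonneg (hbetapos j).le (hlogpa j)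
  have hLnonneg : ∀ j, 0 ≤ L j := fun j =>
    div_nonneg (Real.log_nonneg (hq1 (j+1))) (hqpos j).le
  -- q (j+2) vs a (j+2)
  have hq2eq : ∀ j : ℕ, (q x (j+2) : ℝ) = (pa x (j+2) : ℝ) * (q x (j+1) : ℝ) + (q x j : ℝ) := by
    intro j
    show ((pa x (j+2) * q x (j+1) + q x j : ℤ) : ℝ) = _
    push_cast; ring
  -- R j ≤ L (j+1)
  have hRL : ∀ j, R j ≤ L (j+1) := by
    intro j
    have h1 : (pa x (j+2) : ℝ) ≤ (q x (j+2) : ℝ) := by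
      rw [hq2eq j]
      nlinarith [hq1 j, hq1 (j+1), hpa1 (j+1)]
    have h2 : Real.log (pa x (j+2)) ≤ Real.log (q x (j+2)) :=
      Real.log_le_log (by linarith [hpa1 (j+1)]) h1
    have h3 : R j ≤ Real.log (pa x (j+2)) / (q x (j+1) : ℝ) := by
      rw [hR]
      rw [div_eq_mul_inv, mul_comm]
      exact mul_le_mul_of_nonneg_right (hbeta_le j) (hlogpa j)
    exact le_trans h3 (div_le_div_of_nonneg_right h2 (hqpos (j+1)).le)
  -- L (j+1) ≤ 2 R j + E j
  set E : ℕ → ℝ := fun j => Real.log (2 * (q x (j+1) : ℝ)) / (q x (j+1) : ℝ) with hE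
  have hLR : ∀ j, L (j+1) ≤ 2 * R j + E j := by
    intro j
    have hub : (q x (j+2) : ℝ) ≤ (pa x (j+2) : ℝ) * (2 * (q x (j+1) : ℝ)) := by
      rw [hq2eq j]
      nlinarith [hq1 j, hqmono j, hpa1 (j+1)]
    have hposq2 : (0:ℝ) < (q x (j+2) : ℝ) := hqpos (j+2)
    have hlog : Real.log (q x (j+2)) ≤ Real.log (pa x (j+2)) + Real.log (2 * (q x (j+1) : ℝ)) := by
      calc Real.log (q x (j+2)) ≤ Real.log ((pa x (j+2) : ℝ) * (2 * (q x (j+1) : ℝ))) :=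
            Real.log_le_log hposq2 hub
        _ = Real.log (pa x (j+2)) + Real.log (2 * (q x (j+1) : ℝ)) := by
            rw [Real.log_mul (ne_of_gt (lt_of_lt_of_le one_pos (hpa1 (j+1))))
              (ne_of_gt (by linarith [hq1 (j+1)]))]
    have h2R : Real.log (pa x (j+2)) / (q x (j+1) : ℝ) ≤ 2 * R j := by
      rw [hR]
      have := mul_le_mul_of_nonneg_right (hbeta_ge j) (hlogpa j)
      rw [div_eq_mul_inv]
      calc Real.log (pa x (j+2)) * (q x (j+1) : ℝ)⁻¹
            = 2 * ((2 * (q x (j+1) : ℝ))⁻¹ * Real.log (pa x (j+2))) := by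
              rw [mul_inv]; ring
        _ ≤ 2 * (beta x j * Real.log (pa x (j+2))) := by nlinarith [this]
    have : L (j+1) ≤ (Real.log (pa x (j+2)) + Real.log (2 * (q x (j+1) : ℝ))) / (q x (j+1) : ℝ) := by
      exact div_le_div_of_nonneg_right hlog (hqpos (j+1)).le
    rw [add_div] at this
    linarith [h2R]
  -- E → 0
  have hqtop : Tendsto (fun j : ℕ => (q x (j+1) : ℝ)) atTop atTop := by
    apply tendsto_atTop_mono (fun j => ?_) tendsto_natCast_atTop_atTop
    calc ((j:ℝ)) ≤ (j:ℝ) + 1 := by linarith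
      _ ≤ (q x (j+1) : ℝ) := by exact_mod_cast nat_le_q hx hirr (j+1)
  have hE0 : Tendsto E atTop (nhds 0) := by
    have h2top : Tendsto (fun j : ℕ => 2 * (q x (j+1) : ℝ)) atTop atTop :=
      hqtop.const_mul_atTop two_pos
    have hlogdiv : Tendsto (fun t : ℝ => Real.log t / t) atTop (nhds 0) :=
      Real.isLittleO_log_id_atTop.tendsto_div_nhds_zero
    have := (hlogdiv.comp h2top)
    have heq : E = fun j => 2 * (Real.log (2 * (q x (j+1) : ℝ)) / (2 * (q x (j+1) : ℝ))) := by
      funext j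
      rw [hE]
      have : (q x (j+1) : ℝ) ≠ 0 := (hqpos (j+1)).ne'
      field_simp
    rw [heq]
    simpa using this.const_mul 2
  constructor
  · intro hLt
    have hL1 : Tendsto (fun j => L (j+1)) atTop (nhds 0) :=
      (tendsto_add_atTop_iff_nat 1).2 hLt
    exact tendsto_of_tendsto_of_tendsto_of_le_of_le tendsto_const_nhds hL1 hRnonneg hRL
  · intro hRt
    have hUB : Tendsto (fun j => 2 * R j + E j) atTop (nhds 0) := by
      have := (hRt.const_mul 2).add hE0
      simpa using this
    have hL1 : Tendsto (fun j => L (j+1)) atTop (nhds 0) :=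
      tendsto_of_tendsto_of_tendsto_of_le_of_le tendsto_const_nhds hUB
        (fun j => hLnonneg (j+1)) hLR
    exact (tendsto_add_atTop_iff_nat 1).1 hL1
end

section
/- For every irrational x in (0,1), lim_{j→∞} β_j(x)·log a_j(x) = 0, where a_j are the partial quotients and β_j(x)=∏_{i=0}^{j}G^i(x). -/
open Filter Topology Finset

lemma gauss_step {y : ℝ} (hy : y ∈ Set.Ioo (0:ℝ) 1) (hi : Irrational y) :
    gauss y ∈ Set.Ioo (0:ℝ) 1 ∧ Irrational (gauss y) := by
  have hinv : Irrational y⁻¹ := hi.inv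
  have hirr2 : Irrational (gauss y) := by
    have : gauss y = y⁻¹ - ⌊y⁻¹⌋ := by rw [gauss, Int.fract]
    rw [this]; exact hinv.sub_intCast _
  refine ⟨⟨?_, Int.fract_lt_one _⟩, hirr2⟩
  rcases (Int.fract_nonneg y⁻¹).lt_or_eq with h | h
  · exact h
  · exfalso
    have h0 : gauss y = 0 := h.symm
    rw [h0] at hirr2
    exact hirr2 ⟨0, by simp⟩

lemma gauss_iter (x : ℝ) (hx : x ∈ Set.Ioo (0:ℝ) 1) (hirr : Irrational x) (i : ℕ) :
    gauss^[i] x ∈ Set.Ioo (0:ℝ) 1 ∧ Irrational (gauss^[i] x) := by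
  induction i with
  | zero => exact ⟨hx, hirr⟩
  | succ n ih =>
    rw [Function.iterate_succ_apply']
    exact gauss_step ih.1 ih.2

lemma floor_inv_pos {y : ℝ} (hy : y ∈ Set.Ioo (0:ℝ) 1) : (1:ℤ) ≤ ⌊y⁻¹⌋ := by
  have : (1:ℝ) ≤ y⁻¹ := by
    rw [le_inv_comm₀ one_pos hy.1]; simpa using hy.2.le
  exact_mod_cast Int.le_floor.2 (by exact_mod_cast this)

lemma pair_bound {y : ℝ} (hy : y ∈ Set.Ioo (0:ℝ) 1) : y * gauss y ≤ 1/2 := by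
  have h0 := hy.1
  have ha : (1:ℝ) ≤ (⌊y⁻¹⌋ : ℝ) := by exact_mod_cast floor_inv_pos hy
  have hlt : y⁻¹ < (⌊y⁻¹⌋ : ℝ) + 1 := Int.lt_floor_add_one _
  have hmul : y * y⁻¹ = 1 := mul_inv_cancel₀ h0.ne'
  have : y * gauss y = 1 - (⌊y⁻¹⌋ : ℝ) * y := by
    simp only [gauss, Int.fract]; ring_nf; nlinarith [hmul]
  rw [this]
  nlinarith [hmul]

lemma log_bound {y : ℝ} (hy : y ∈ Set.Ioo (0:ℝ) 1) : y * Real.log (⌊y⁻¹⌋ : ℤ) ≤ 1 := by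
  have h0 := hy.1
  have ha : (1:ℝ) ≤ (⌊y⁻¹⌋ : ℝ) := by exact_mod_cast floor_inv_pos hy
  have hfl : ((⌊y⁻¹⌋ : ℤ) : ℝ) ≤ y⁻¹ := Int.floor_le _
  have h1 : Real.log (⌊y⁻¹⌋ : ℤ) ≤ Real.log y⁻¹ := by
    exact Real.log_le_log (by linarith) hfl
  have h2 : Real.log y⁻¹ ≤ y⁻¹ - 1 := Real.log_le_sub_one_of_pos (by positivity)
  have h3 : y * Real.log (⌊y⁻¹⌋ : ℤ) ≤ y * (y⁻¹ - 1) :=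
    mul_le_mul_of_nonneg_left (h1.trans h2) h0.le
  have hmul : y * y⁻¹ = 1 := mul_inv_cancel₀ h0.ne'
  nlinarith

lemma log_nonneg' {y : ℝ} (hy : y ∈ Set.Ioo (0:ℝ) 1) : 0 ≤ Real.log (⌊y⁻¹⌋ : ℤ) := by
  apply Real.log_nonneg
  exact_mod_cast floor_inv_pos hy

/-- `β_j log a_j → 0` for every irrational `x ∈ (0,1)`. -/
theorem stmt5 (x : ℝ) (hx : x ∈ Set.Ioo (0:ℝ) 1) (hirr : Irrational x) :
    Tendsto (fun j : ℕ => beta x (j+1) * Real.log (pa x (j+1))) atTop (nhds 0) := by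
  set y : ℕ → ℝ := fun i => gauss^[i] x with hy
  have hmem : ∀ i, y i ∈ Set.Ioo (0:ℝ) 1 := fun i => (gauss_iter x hx hirr i).1
  set P : ℕ → ℝ := fun j => ∏ i ∈ Finset.range j, y i with hP
  have hPpos : ∀ j, 0 < P j := fun j => Finset.prod_pos (fun i _ => (hmem i).1)
  set r : ℝ := (Real.sqrt 2)⁻¹ with hr
  have hr0 : 0 < r := by positivity
  have hr2 : r ^ 2 = 1/2 := by
    rw [hr, inv_pow, Real.sq_sqrt (by norm_num : (2:ℝ) ≥ 0)]
    norm_num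
  have hr1 : r < 1 := by
    nlinarith [hr2, hr0]
  -- P j ≤ 2 * r ^ j
  have hPbound : ∀ j, P j ≤ 2 * r ^ j := by
    intro j
    induction j using Nat.strong_induction_on with
    | _ j ih =>
      match j with
      | 0 => simp [hP]
      | 1 =>
        have : P 1 = y 0 := by simp [hP]
        rw [this]
        nlinarith [(hmem 0).2, hr2, hr0]
      | (n+2) =>
        have hstep : P (n+2) = P n * (y n * gauss (y n)) := by
          have hgy : y (n+1) = gauss (y n) := by
            simp only [hy]; rw [Function.iterate_succ_apply']
          simp only [hP]
          rw [Finset.prod_range_succ, Finset.prod_range_succ, hgy]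
          ring
        have hpair : y n * gauss (y n) ≤ 1/2 := pair_bound (hmem n)
        have hpairpos : 0 < y n * gauss (y n) := by
          have hg : gauss (y n) = y (n+1) := by
            simp only [hy]; rw [Function.iterate_succ_apply']
          rw [hg]; exact mul_pos (hmem n).1 (hmem (n+1)).1
        calc P (n+2) = P n * (y n * gauss (y n)) := hstep
          _ ≤ (2 * r ^ n) * (1/2) := by
              apply mul_le_mul (ih n (by omega)) hpair hpairpos.le
              positivity
          _ = 2 * r ^ (n+2) := by rw [show (n+2) = n + 2 from rfl, pow_add, hr2]; ring
  -- the sequence and its bound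
  have key : ∀ j : ℕ, beta x (j+1) * Real.log (pa x (j+1)) ∈ Set.Icc 0 (2 * r ^ j) := by
    intro j
    have hpa : (pa x (j+1) : ℝ) = ((⌊(y j)⁻¹⌋ : ℤ) : ℝ) := by
      simp [pa, hy]
    have hbeta : beta x (j+1) = P j * y j * y (j+1) := by
      simp only [beta, hP, hy]
      rw [Finset.prod_range_succ, Finset.prod_range_succ]
    have hL0 : 0 ≤ Real.log (pa x (j+1)) := by rw [hpa]; exact log_nonneg' (hmem j)
    constructor
    · rw [hbeta]
      have := (hmem j).1; have := (hmem (j+1)).1; have := hPpos j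
      positivity
    · have hyL : y j * Real.log (pa x (j+1)) ≤ 1 := by
        rw [hpa]; exact log_bound (hmem j)
      have h1 : beta x (j+1) * Real.log (pa x (j+1))
          = P j * (y j * Real.log (pa x (j+1))) * y (j+1) := by
        rw [hbeta]; ring
      rw [h1]
      have hPle := hPbound j
      have hy1 := hmem (j+1)
      have hyj := hmem j
      have hPp := hPpos j
      have t0 : 0 ≤ y j * Real.log (pa x (j+1)) := mul_nonneg (hmem j).1.le hL0
      have hprod : P j * (y j * Real.log (pa x (j+1))) * y (j+1) ≤ P j := by
        have step1 : P j * (y j * Real.log (pa x (j+1))) * y (j+1)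
            ≤ P j * (y j * Real.log (pa x (j+1))) :=
          mul_le_of_le_one_right (mul_nonneg hPp.le t0) hy1.2.le
        have step2 : P j * (y j * Real.log (pa x (j+1))) ≤ P j * 1 :=
          mul_le_mul_of_nonneg_left hyL hPp.le
        linarith
      exact hprod.trans hPle
  -- squeeze
  have htend : Tendsto (fun j : ℕ => 2 * r ^ j) atTop (nhds 0) := by
    have := tendsto_pow_atTop_nhds_zero_of_lt_one hr0.le hr1
    simpa using this.const_mul 2
  exact squeeze_zero (fun j => (key j).1) (fun j => (key j).2) htend
end
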